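/- arXiv:2001.01379 — 10 statements merged into one kernel-verified Lean document; each statement's English description precedes it below -/
import Mathlib

section
/- (Frenet-type equations, Theorem 2.1.) Let e₁, v : ℝ → ℝ³ be smooth curves, and let p₁, p₂, p₃, q₁, q₂ : ℝ → ℝ be continuous functions such that e₁''(s) = p₁(s)·e₁(s) + p₂(s)·e₁'(s) + p₃(s)·v(s) and v'(s) = q₁(s)·e₁(s) + q₂(s)·e₁'(s) for all s. Fix s₀ ∈ ℝ, a constant c₁ > 0 and a constant c₂ ∈ ℝ, and set k(s) = c₁·exp(∫_{s₀}^{s} p₂), f(s) = c₂ − ∫_{s₀}^{s} q₁, e₂(s) = e₁'(s)/k(s), e₃(s) = v(s) + f(s)·e₁(s), k*(s) = (f(s)p₃(s) − p₁(s))/k(s), w(s) = p₃(s)/k(s), and w*(s) = −k(s)(f(s) + q₂(s)). Then for all s: e₁'(s) = k(s)·e₂(s), e₂'(s) = −k*(s)·e₁(s) + w(s)·e₃(s), and e₃'(s) = −w*(s)·e₂(s). -/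
/-- Theorem 2.1: Frenet-type equations.  With
`e₁'' = p₁·e₁ + p₂·e₁' + p₃·v`, `v' = q₁·e₁ + q₂·e₁'`,
`k(s) = c₁·exp(∫_{s₀}^s p₂)`, `f(s) = c₂ − ∫_{s₀}^s q₁`,
`e₂ = e₁'/k`, `e₃ = v + f·e₁`, `k* = (f·p₃ − p₁)/k`, `w = p₃/k`,
`w* = −k·(f + q₂)`, one has `e₁' = k·e₂`, `e₂' = −k*·e₁ + w·e₃`,
`e₃' = −w*·e₂`. -/
theorem stmt_2 (e₁ v : ℝ → (Fin 3 → ℝ)) (p₁ p₂ p₃ q₁ q₂ : ℝ → ℝ)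
    (he₁ : ContDiff ℝ (⊤ : ℕ∞) e₁) (hv : ContDiff ℝ (⊤ : ℕ∞) v)
    (hp₁ : Continuous p₁) (hp₂ : Continuous p₂) (hp₃ : Continuous p₃)
    (hq₁ : Continuous q₁) (hq₂ : Continuous q₂)
    (hODE₁ : ∀ s, deriv (deriv e₁) s
      = p₁ s • e₁ s + p₂ s • deriv e₁ s + p₃ s • v s)
    (hODE₂ : ∀ s, deriv v s = q₁ s • e₁ s + q₂ s • deriv e₁ s)
    (s₀ c₁ c₂ : ℝ) (hc₁ : 0 < c₁)
    (k f : ℝ → ℝ)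
    (hk : ∀ s, k s = c₁ * Real.exp (∫ σ in s₀..s, p₂ σ))
    (hf : ∀ s, f s = c₂ - ∫ σ in s₀..s, q₁ σ)
    (e₂ e₃ : ℝ → (Fin 3 → ℝ))
    (he₂ : ∀ s, e₂ s = (k s)⁻¹ • deriv e₁ s)
    (he₃ : ∀ s, e₃ s = v s + f s • e₁ s)
    (kstar w wstar : ℝ → ℝ)
    (hkstar : ∀ s, kstar s = (f s * p₃ s - p₁ s) / k s)
    (hw : ∀ s, w s = p₃ s / k s)
    (hwstar : ∀ s, wstar s = -(k s * (f s + q₂ s))) :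
    (∀ s, deriv e₁ s = k s • e₂ s) ∧
    (∀ s, deriv e₂ s = -kstar s • e₁ s + w s • e₃ s) ∧
    (∀ s, deriv e₃ s = -wstar s • e₂ s) := by
  have knz : ∀ s, k s ≠ 0 := fun s => by
    rw [hk]; positivity
  have hkd : ∀ s, HasDerivAt k (p₂ s * k s) s := by
    intro s
    have h2 := ((hp₂.integral_hasStrictDerivAt s₀ s).hasDerivAt.exp).const_mul c₁
    have h3 : HasDerivAt (fun u => c₁ * Real.exp (∫ σ in s₀..u, p₂ σ)) (p₂ s * k s) s := by
      refine h2.congr_deriv ?_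
      rw [hk]; ring
    rwa [show (fun u => c₁ * Real.exp (∫ σ in s₀..u, p₂ σ)) = k from
      funext fun u => (hk u).symm] at h3
  have hfd : ∀ s, HasDerivAt f (-q₁ s) s := by
    intro s
    have h2 := (hq₁.integral_hasStrictDerivAt s₀ s).hasDerivAt.const_sub c₂
    rwa [show (fun u => c₂ - ∫ σ in s₀..u, q₁ σ) = f from
      funext fun u => (hf u).symm] at h2
  have hde1 : Differentiable ℝ e₁ := he₁.differentiable (by norm_num)
  have hdd : Differentiable ℝ (deriv e₁) :=
    ((contDiff_infty_iff_deriv.mp he₁).2).differentiable (by norm_num)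
  have hvd : Differentiable ℝ v := hv.differentiable (by norm_num)
  refine ⟨fun s => ?_, fun s => ?_, fun s => ?_⟩
  · rw [he₂, smul_smul, mul_inv_cancel₀ (knz s), one_smul]
  · have hE : e₂ = fun u => (k u)⁻¹ • deriv e₁ u := funext he₂
    rw [hE]
    have h := (HasDerivAt.inv (hkd s) (knz s)).smul ((hdd s).hasDerivAt)
    rw [show (fun u => (k u)⁻¹ • deriv e₁ u) = k⁻¹ • deriv e₁ from rfl, h.deriv, Pi.inv_apply, hODE₁ s, hkstar, hw, he₃]
    match_scalars <;> field_simp [knz s] <;> try ring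
  · have hE : e₃ = fun u => v u + f u • e₁ u := funext he₃
    rw [hE]
    have h := ((hvd s).hasDerivAt).add ((hfd s).smul ((hde1 s).hasDerivAt))
    rw [show (fun u => v u + f u • e₁ u) = v + f • e₁ from rfl, h.deriv, hODE₂ s, hwstar, he₂]
    match_scalars <;> field_simp [knz s] <;> try ring
end

section
/- Let e₁, e₂, e₃ : ℝ → ℝ³ be differentiable curves and k, k*, w, w* : ℝ → ℝ be functions with k(s) > 0 for all s, satisfying the Frenet-type equations e₁' = k·e₂, e₂' = −k*·e₁ + w·e₃, e₃' = −w*·e₂. For constants a > 0 and b ∈ ℝ, define ē₂ = (1/a)·e₂, ē₃ = e₃ + b·e₁, k̄ = a·k, k̄* = (1/a)(k* + b·w), w̄ = (1/a)·w, and w̄* = a(w* − b·k). Then the new frame satisfies the Frenet-type equations e₁' = k̄·ē₂, ē₂' = −k̄*·e₁ + w̄·ē₃, and ē₃' = −w̄*·ē₂. -/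
/-- A frame change `ē₂ = (1/a)·e₂`, `ē₃ = e₃ + b·e₁` (with
`a > 0`, `b ∈ ℝ`) transforms the Frenet-type coefficients `(k, k*, w, w*)`
into `k̄ = a·k`, `k̄* = (1/a)(k* + b·w)`, `w̄ = (1/a)·w`, `w̄* = a(w* − b·k)`,
and the new frame again satisfies the Frenet-type equations. -/
theorem stmt_3 (e₁ e₂ e₃ : ℝ → (Fin 3 → ℝ)) (k kstar w wstar : ℝ → ℝ)
    (hd₁ : Differentiable ℝ e₁) (hd₂ : Differentiable ℝ e₂)
    (hd₃ : Differentiable ℝ e₃)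
    (hkpos : ∀ s, 0 < k s)
    (hF₁ : ∀ s, deriv e₁ s = k s • e₂ s)
    (hF₂ : ∀ s, deriv e₂ s = -kstar s • e₁ s + w s • e₃ s)
    (hF₃ : ∀ s, deriv e₃ s = -wstar s • e₂ s)
    (a b : ℝ) (ha : 0 < a) :
    (∀ s, deriv e₁ s = (a * k s) • ((1 / a) • e₂ s)) ∧
    (∀ s, deriv (fun t => (1 / a) • e₂ t) s
      = -((1 / a) * (kstar s + b * w s)) • e₁ s
        + ((1 / a) * w s) • (e₃ s + b • e₁ s)) ∧
    (∀ s, deriv (fun t => e₃ t + b • e₁ t) s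
      = -(a * (wstar s - b * k s)) • ((1 / a) • e₂ s)) := by
  have ha' : a ≠ 0 := ha.ne'
  refine ⟨fun s => ?_, fun s => ?_, fun s => ?_⟩
  · rw [hF₁, smul_smul]
    congr 1
    field_simp
  · rw [deriv_fun_const_smul _ (hd₂ s), hF₂]
    match_scalars <;> field_simp <;> ring
  · rw [deriv_fun_add (g := fun t => b • e₁ t) (hd₃ s) ((hd₁ s).const_smul b), deriv_fun_const_smul _ (hd₁ s),
      hF₃, hF₁]
    match_scalars <;> field_simp <;> ring
end

section
/- (Theorem 2.2.) Let k, k*, w, w* : ℝ → ℝ be differentiable functions with k(s) > 0 for all s. For constants a > 0 and b ∈ ℝ, define k̄ = a·k, k̄* = (1/a)(k* + b·w), w̄ = (1/a)·w, and w̄* = a(w* − b·k). Then for all s: k̄(s)·w̄(s) = k(s)·w(s); k̄'(s)/k̄(s) = k'(s)/k(s); k̄(s)·k̄*(s) + w̄(s)·w̄*(s) = k(s)·k*(s) + w(s)·w*(s); and (w̄*/k̄)'(s) = (w*/k)'(s). In other words, the quantities I₁ = kw, I₂ = k'/k, I₃ = kk* + ww*, and I₄ = (w*/k)' are invariant under the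 frame change determined by a and b. -/
/-- Theorem 2.2: The quantities `I₁ = kw`, `I₂ = k'/k`,
`I₃ = kk* + ww*`, `I₄ = (w*/k)'` are invariant under the frame change
`k̄ = a·k`, `k̄* = (1/a)(k* + b·w)`, `w̄ = (1/a)·w`, `w̄* = a(w* − b·k)`. -/
theorem stmt_4 (k kstar w wstar : ℝ → ℝ)
    (hk : Differentiable ℝ k) (hkstar : Differentiable ℝ kstar)
    (hw : Differentiable ℝ w) (hwstar : Differentiable ℝ wstar)
    (hkpos : ∀ s, 0 < k s)
    (a b : ℝ) (ha : 0 < a) :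
    (∀ s, (a * k s) * ((1 / a) * w s) = k s * w s) ∧
    (∀ s, deriv (fun t => a * k t) s / (a * k s) = deriv k s / k s) ∧
    (∀ s, (a * k s) * ((1 / a) * (kstar s + b * w s))
        + ((1 / a) * w s) * (a * (wstar s - b * k s))
      = k s * kstar s + w s * wstar s) ∧
    (∀ s, deriv (fun t => (a * (wstar t - b * k t)) / (a * k t)) s
      = deriv (fun t => wstar t / k t) s) := by
  have ha' : a ≠ 0 := ne_of_gt ha
  refine ⟨fun s => by field_simp, fun s => ?_, fun s => by field_simp; ring, fun s => ?_⟩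
  · rw [deriv_const_mul a (hk s)]
    rw [mul_div_mul_left _ _ ha']
  · have heq : (fun t => (a * (wstar t - b * k t)) / (a * k t))
        = fun t => wstar t / k t - b := by
      funext t
      have : k t ≠ 0 := ne_of_gt (hkpos t)
      field_simp
    rw [heq, deriv_sub_const]
end

section
/- (Characterization of cylindrical helices, Theorem 3.1.) Let e₁, e₂, e₃ : ℝ → ℝ³ be differentiable curves that are linearly independent at every s, and let k, k*, w, w* : ℝ → ℝ be continuous with k(s) > 0 for all s, satisfying the Frenet-type equations e₁' = k·e₂, e₂' = −k*·e₁ + w·e₃, e₃' = −w*·e₂. Then there exists a nonzero vector a₀ ∈ ℝ³ such that a₀ lies in the linear span of {e₁(s), e₃(s)} for every s if and only if the function s ↦ w*(s)/k(s) is constant. -/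
noncomputable def det3 (u v x : Fin 3 → ℝ) : ℝ :=
  u 0 * v 1 * x 2 - u 0 * v 2 * x 1 - u 1 * v 0 * x 2 +
    u 1 * v 2 * x 0 + u 2 * v 0 * x 1 - u 2 * v 1 * x 0

lemma hasDerivAt_proj {f : ℝ → Fin 3 → ℝ} {f' : Fin 3 → ℝ} {s : ℝ}
    (hf : HasDerivAt f f' s) (i : Fin 3) :
    HasDerivAt (fun t => f t i) (f' i) s := by
  exact hasDerivAt_pi.mp hf i

lemma hasDerivAt_det3 {u x : ℝ → Fin 3 → ℝ} {u' x' v : Fin 3 → ℝ} {s : ℝ}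
    (hu : HasDerivAt u u' s) (hx : HasDerivAt x x' s) :
    HasDerivAt (fun t => det3 (u t) v (x t))
      (det3 u' v (x s) + det3 (u s) v x') s := by
  have U : ∀ i, HasDerivAt (fun t => u t i) (u' i) s := fun i => hasDerivAt_proj hu i
  have X : ∀ i, HasDerivAt (fun t => x t i) (x' i) s := fun i => hasDerivAt_proj hx i
  have h := ((((((U 0).mul_const (v 1)).mul (X 2)).sub
      (((U 0).mul_const (v 2)).mul (X 1))).sub
      (((U 1).mul_const (v 0)).mul (X 2))).add
      (((U 1).mul_const (v 2)).mul (X 0))).add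
      ((((U 2).mul_const (v 0)).mul (X 1)).sub
      (((U 2).mul_const (v 1)).mul (X 0)))
  convert h using 1
  · rfl
  · rfl
  · funext t; simp [det3]; ring
  · simp [det3]; ring

lemma det3_ne_zero {a b c : Fin 3 → ℝ} (h : LinearIndependent ℝ ![a, b, c]) :
    det3 a b c ≠ 0 := by
  have hM : LinearIndependent ℝ (fun i => (Matrix.of ![a, b, c]) i) := h
  have hu : IsUnit (Matrix.of ![a, b, c]) :=
    Matrix.linearIndependent_rows_iff_isUnit.mp hM
  have hdet : IsUnit (Matrix.of ![a, b, c]).det := hu.map Matrix.detMonoidHom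
  have : (Matrix.of ![a, b, c]).det = det3 a b c := by
    rw [Matrix.det_fin_three]
    simp [det3, Matrix.of_apply]
  rw [this] at hdet
  exact hdet.ne_zero



/-- Theorem 3.1, cylindrical helices: For a Frenet-type frame
`(e₁, e₂, e₃)` with coefficients `(k, k*, w, w*)`, `k > 0`, there is a fixed
nonzero direction `a₀` lying in every rectifying plane `span{e₁(s), e₃(s)}`
iff `w*/k` is constant. -/
theorem stmt_7 (e₁ e₂ e₃ : ℝ → (Fin 3 → ℝ)) (k kstar w wstar : ℝ → ℝ)
    (hd₁ : Differentiable ℝ e₁) (hd₂ : Differentiable ℝ e₂)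
    (hd₃ : Differentiable ℝ e₃)
    (hli : ∀ s, LinearIndependent ℝ ![e₁ s, e₂ s, e₃ s])
    (hk : Continuous k) (hkstar : Continuous kstar)
    (hw : Continuous w) (hwstar : Continuous wstar)
    (hkpos : ∀ s, 0 < k s)
    (hF₁ : ∀ s, deriv e₁ s = k s • e₂ s)
    (hF₂ : ∀ s, deriv e₂ s = -kstar s • e₁ s + w s • e₃ s)
    (hF₃ : ∀ s, deriv e₃ s = -wstar s • e₂ s) :
    (∃ a₀ : Fin 3 → ℝ, a₀ ≠ 0 ∧
      ∀ s, a₀ ∈ Submodule.span ℝ {e₁ s, e₃ s}) ↔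
    (∃ c : ℝ, ∀ s, wstar s / k s = c) := by
  have hE1 : ∀ s, HasDerivAt e₁ (k s • e₂ s) s := fun s => hF₁ s ▸ (hd₁ s).hasDerivAt
  have hE2 : ∀ s, HasDerivAt e₂ (-kstar s • e₁ s + w s • e₃ s) s :=
    fun s => hF₂ s ▸ (hd₂ s).hasDerivAt
  have hE3 : ∀ s, HasDerivAt e₃ (-wstar s • e₂ s) s := fun s => hF₃ s ▸ (hd₃ s).hasDerivAt
  constructor
  · rintro ⟨a₀, ha₀, hspan⟩
    set A : ℝ → ℝ := fun s => det3 (e₂ s) a₀ (e₃ s) with hAdef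
    set B : ℝ → ℝ := fun s => det3 (e₁ s) a₀ (e₂ s) with hBdef
    set C : ℝ → ℝ := fun s => det3 (e₁ s) a₀ (e₃ s) with hCdef
    have hC : ∀ s, C s = 0 := by
      intro s
      obtain ⟨a, b, hab⟩ := Submodule.mem_span_pair.mp (hspan s)
      simp only [hCdef, ← hab, det3, Pi.add_apply, Pi.smul_apply, smul_eq_mul]
      ring
    -- A has derivative 0
    have hA' : ∀ s, HasDerivAt A 0 s := by
      intro s
      have h := hasDerivAt_det3 (v := a₀) (hE2 s) (hE3 s)
      convert h using 1
      have := hC s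
      simp only [hCdef, det3] at this
      simp only [det3, Pi.add_apply, Pi.smul_apply, Pi.neg_apply, smul_eq_mul, neg_mul]
      linear_combination (kstar s) * this
    have hB' : ∀ s, HasDerivAt B 0 s := by
      intro s
      have h := hasDerivAt_det3 (v := a₀) (hE1 s) (hE2 s)
      convert h using 1
      have := hC s
      simp only [hCdef, det3] at this
      simp only [det3, Pi.add_apply, Pi.smul_apply, Pi.neg_apply, smul_eq_mul, neg_mul]
      linear_combination (-(w s)) * this
    have hCder : ∀ s, HasDerivAt C (k s * A s - wstar s * B s) s := by
      intro s
      have h := hasDerivAt_det3 (v := a₀) (hE1 s) (hE3 s)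
      convert h using 1
      simp only [hAdef, hBdef, det3, Pi.add_apply, Pi.smul_apply, Pi.neg_apply, smul_eq_mul,
        neg_mul]
      ring
    have hCzero : C = fun _ => (0 : ℝ) := funext hC
    have hrel : ∀ s, k s * A s = wstar s * B s := by
      intro s
      have h0 : HasDerivAt C 0 s := by rw [hCzero]; exact hasDerivAt_const s 0
      have := (hCder s).unique h0
      linarith
    have hAconst : ∀ s, A s = A 0 :=
      fun s => is_const_of_deriv_eq_zero (fun t => (hA' t).differentiableAt)
        (fun t => (hA' t).deriv) s 0
    have hBconst : ∀ s, B s = B 0 :=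
      fun s => is_const_of_deriv_eq_zero (fun t => (hB' t).differentiableAt)
        (fun t => (hB' t).deriv) s 0
    by_cases hB0 : B 0 = 0
    · exfalso
      have hA0 : A 0 = 0 := by
        have := hrel 0
        rw [hB0] at this
        have hk0 := (hkpos 0).ne'
        rw [mul_zero] at this
        exact (mul_eq_zero.mp this).resolve_left hk0
      obtain ⟨a, b, hab⟩ := Submodule.mem_span_pair.mp (hspan 0)
      have hD : det3 (e₁ 0) (e₂ 0) (e₃ 0) ≠ 0 := det3_ne_zero (hli 0)
      have ha : a * det3 (e₁ 0) (e₂ 0) (e₃ 0) = 0 := by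
        have := hA0
        simp only [hAdef, ← hab, det3, Pi.add_apply, Pi.smul_apply, smul_eq_mul] at this
        simp only [det3]
        linarith [this]
      have hb : b * det3 (e₁ 0) (e₂ 0) (e₃ 0) = 0 := by
        have := hB0
        simp only [hBdef, ← hab, det3, Pi.add_apply, Pi.smul_apply, smul_eq_mul] at this
        simp only [det3]
        linarith [this]
      have ha' : a = 0 := by
        rcases mul_eq_zero.mp ha with h | h
        · exact h
        · exact absurd h hD
      have hb' : b = 0 := by
        rcases mul_eq_zero.mp hb with h | h
        · exact h
        · exact absurd h hD
      apply ha₀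
      rw [← hab, ha', hb']
      simp
    · refine ⟨A 0 / B 0, fun s => ?_⟩
      have h1 : k s * A 0 = wstar s * B 0 := by
        have := hrel s
        rw [hAconst s, hBconst s] at this
        exact this
      have hks := (hkpos s).ne'
      field_simp
      linarith [h1]
  · rintro ⟨c, hc⟩
    have hw' : ∀ s, wstar s = c * k s := by
      intro s
      have := hc s
      field_simp [(hkpos s).ne'] at this
      linarith [this]
    set f : ℝ → Fin 3 → ℝ := fun s => c • e₁ s + e₃ s with hfdef
    have hf' : ∀ s, HasDerivAt f 0 s := by
      intro s
      have h := ((hE1 s).const_smul c).add (hE3 s)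
      convert h using 1
      · rfl
      · rfl
      · rfl
      · rfl
      rw [hw' s]
      ext i
      simp [smul_smul]
    have hfconst : ∀ s, f s = f 0 :=
      fun s => is_const_of_deriv_eq_zero (fun t => (hf' t).differentiableAt)
        (fun t => (hf' t).deriv) s 0
    refine ⟨f 0, ?_, fun s => ?_⟩
    · intro h0
      have := hli 0
      rw [Fintype.linearIndependent_iff] at this
      have h1 := this ![c, 0, 1] ?_ 2
      · simp at h1
      · rw [← h0, hfdef]
        simp [Fin.sum_univ_three]
    · rw [← hfconst s]
      exact Submodule.mem_span_pair.mpr ⟨c, 1, by simp [hfdef]⟩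
end

section
/- (Behavior of the coefficients under the speed change of Example 2.) Let a, v : ℝ → ℝ³ be smooth curves and P₁, P₂, P₃, Q₁, Q₂ : ℝ → ℝ smooth functions with a''' = P₁·a' + P₂·a'' + P₃·v and v' = Q₁·a' + Q₂·a''. Let f : ℝ → ℝ be smooth and positive, and let ψ : ℝ → ℝ be a smooth map with ψ'(σ) = 1/f(ψ(σ)) for all σ (the inverse of the reparametrization with speed f). Define E₁ = a' ∘ ψ and V = v ∘ ψ. Then for all σ: E₁''(σ) = (P₁/f²)(ψ(σ))·E₁(σ) + (P₂/f − f'/f²)(ψ(σ))·E₁'(σ) + (P₃/f²)(ψ(σ))·V(σ), and V'(σ) = (Q₁/f)(ψ(σ))·E₁(σ) + Q₂(ψ(σ))·E₁'(σ). Consequently, the invariants of the reparametrized curve satisfy I₁ = P₃/f², I₂ = P₂/f − f'/f², I₃ = −(P₁ + P₃Q₂)/f², and I₄ = (Q₁ − Q₂')/f (each evaluated along ψ). -/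
/-- Example 2: Behavior of the frame-decomposition coefficients
and of the invariants under the speed change `γ = ∫ f·a'`.  With
`a''' = P₁·a' + P₂·a'' + P₃·v`, `v' = Q₁·a' + Q₂·a''`, `ψ' = 1/(f ∘ ψ)`,
`E₁ = a' ∘ ψ`, `V = v ∘ ψ`:
`E₁'' = (P₁/f²)·E₁ + (P₂/f − f'/f²)·E₁' + (P₃/f²)·V`,
`V' = (Q₁/f)·E₁ + Q₂·E₁'`, and the invariants become
`I₁ = P₃/f²`, `I₂ = P₂/f − f'/f²`, `I₃ = −(P₁ + P₃Q₂)/f²`,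
`I₄ = (Q₁ − Q₂')/f` (each evaluated along `ψ`). -/
theorem stmt_9 (a v : ℝ → (Fin 3 → ℝ)) (P₁ P₂ P₃ Q₁ Q₂ : ℝ → ℝ)
    (ha : ContDiff ℝ (⊤ : ℕ∞) a) (hv : ContDiff ℝ (⊤ : ℕ∞) v)
    (hP₁ : ContDiff ℝ (⊤ : ℕ∞) P₁) (hP₂ : ContDiff ℝ (⊤ : ℕ∞) P₂)
    (hP₃ : ContDiff ℝ (⊤ : ℕ∞) P₃)
    (hQ₁ : ContDiff ℝ (⊤ : ℕ∞) Q₁) (hQ₂ : ContDiff ℝ (⊤ : ℕ∞) Q₂)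
    (hODE₁ : ∀ s, deriv (deriv (deriv a)) s
      = P₁ s • deriv a s + P₂ s • deriv (deriv a) s + P₃ s • v s)
    (hODE₂ : ∀ s, deriv v s = Q₁ s • deriv a s + Q₂ s • deriv (deriv a) s)
    (f : ℝ → ℝ) (hf : ContDiff ℝ (⊤ : ℕ∞) f) (hfpos : ∀ s, 0 < f s)
    (ψ : ℝ → ℝ) (hψ : ContDiff ℝ (⊤ : ℕ∞) ψ)
    (hψ' : ∀ σ, deriv ψ σ = 1 / f (ψ σ))
    (E₁ V : ℝ → (Fin 3 → ℝ))
    (hE₁ : ∀ σ, E₁ σ = deriv a (ψ σ)) (hV : ∀ σ, V σ = v (ψ σ)) :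
    (∀ σ, deriv (deriv E₁) σ
      = (P₁ (ψ σ) / (f (ψ σ)) ^ 2) • E₁ σ
        + (P₂ (ψ σ) / f (ψ σ) - deriv f (ψ σ) / (f (ψ σ)) ^ 2) • deriv E₁ σ
        + (P₃ (ψ σ) / (f (ψ σ)) ^ 2) • V σ) ∧
    (∀ σ, deriv V σ
      = (Q₁ (ψ σ) / f (ψ σ)) • E₁ σ + Q₂ (ψ σ) • deriv E₁ σ) ∧
    (∀ σ, -(P₁ (ψ σ) / (f (ψ σ)) ^ 2)
        - (P₃ (ψ σ) / (f (ψ σ)) ^ 2) * Q₂ (ψ σ)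
      = -(P₁ (ψ σ) + P₃ (ψ σ) * Q₂ (ψ σ)) / (f (ψ σ)) ^ 2) ∧
    (∀ σ, Q₁ (ψ σ) / f (ψ σ) - deriv (fun τ => Q₂ (ψ τ)) σ
      = (Q₁ (ψ σ) - deriv Q₂ (ψ σ)) / f (ψ σ)) := by
  have fne : ∀ σ, f (ψ σ) ≠ 0 := fun σ => (hfpos (ψ σ)).ne'
  have ha1 : ContDiff ℝ (⊤ : ℕ∞) (deriv a) := (contDiff_infty_iff_deriv.mp ha).2
  have ha2 : ContDiff ℝ (⊤ : ℕ∞) (deriv (deriv a)) := (contDiff_infty_iff_deriv.mp ha1).2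
  have hψdd : Differentiable ℝ ψ := hψ.differentiable (by simp)
  have hψh : ∀ σ, HasDerivAt ψ ((f (ψ σ))⁻¹) σ := by
    intro σ
    have := (hψdd σ).hasDerivAt
    rwa [hψ' σ, one_div] at this
  -- first derivative of E₁
  have hE₁fun : E₁ = fun σ => deriv a (ψ σ) := funext hE₁
  have hE₁d : ∀ σ, HasDerivAt E₁ ((f (ψ σ))⁻¹ • deriv (deriv a) (ψ σ)) σ := by
    intro σ
    rw [hE₁fun]
    exact HasDerivAt.scomp σ
      ((ha1.differentiable (by simp) (ψ σ)).hasDerivAt) (hψh σ)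
  have hE₁' : ∀ σ, deriv E₁ σ = (f (ψ σ))⁻¹ • deriv (deriv a) (ψ σ) :=
    fun σ => (hE₁d σ).deriv
  -- second derivative of E₁
  have hcd : ∀ σ, HasDerivAt (fun τ => (f (ψ τ))⁻¹)
      (-(deriv f (ψ σ) * (f (ψ σ))⁻¹) / (f (ψ σ)) ^ 2) σ := by
    intro σ
    have hfψ : HasDerivAt (fun τ => f (ψ τ))
        (deriv f (ψ σ) * (f (ψ σ))⁻¹) σ := by
      have := ((hf.differentiable (by simp) (ψ σ)).hasDerivAt.comp σ (hψh σ))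
      simpa [mul_comm, Function.comp_def] using this
    exact hfψ.inv (fne σ)
  have hE₁dd : ∀ σ, HasDerivAt (deriv E₁)
      ((f (ψ σ))⁻¹ • ((f (ψ σ))⁻¹ • deriv (deriv (deriv a)) (ψ σ))
        + (-(deriv f (ψ σ) * (f (ψ σ))⁻¹) / (f (ψ σ)) ^ 2) • deriv (deriv a) (ψ σ)) σ := by
    intro σ
    have : deriv E₁ = fun τ => (f (ψ τ))⁻¹ • deriv (deriv a) (ψ τ) := funext hE₁'
    rw [this]
    have hgd : HasDerivAt (fun τ => deriv (deriv a) (ψ τ))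
        ((f (ψ σ))⁻¹ • deriv (deriv (deriv a)) (ψ σ)) σ :=
      HasDerivAt.scomp σ
        ((ha2.differentiable (by simp) (ψ σ)).hasDerivAt) (hψh σ)
    exact (hcd σ).smul hgd
  refine ⟨?_, ?_, ?_, ?_⟩
  · intro σ
    rw [(hE₁dd σ).deriv, hODE₁ (ψ σ), hE₁ σ, hE₁' σ, hV σ]
    funext i
    have h := fne σ
    simp only [Pi.add_apply, Pi.smul_apply, smul_eq_mul, smul_add]
    field_simp
    ring
  · intro σ
    have hVd : HasDerivAt V ((f (ψ σ))⁻¹ • deriv v (ψ σ)) σ := by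
      rw [funext hV]
      exact HasDerivAt.scomp σ
        ((hv.differentiable (by simp) (ψ σ)).hasDerivAt) (hψh σ)
    rw [hVd.deriv, hODE₂ (ψ σ), hE₁ σ, hE₁' σ]
    funext i
    have h := fne σ
    simp only [Pi.add_apply, Pi.smul_apply, smul_eq_mul, smul_add]
    field_simp
  · intro σ
    have h := fne σ
    field_simp
    ring
  · intro σ
    have hQd : HasDerivAt (fun τ => Q₂ (ψ τ)) (deriv Q₂ (ψ σ) * (f (ψ σ))⁻¹) σ := by
      have := ((hQ₂.differentiable (by simp) (ψ σ)).hasDerivAt.comp σ (hψh σ))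
      simpa [mul_comm, Function.comp_def] using this
    rw [hQd.deriv]
    have h := fne σ
    field_simp
end

section
/- (Theorem 5.1: invariance of I₄ under parallel translation of the unit sphere.) Let γ, v : ℝ → ℝ³ be smooth curves, set e₁ = γ', and suppose e₁(s) and e₁'(s) are linearly independent for every s and that v' = q₁·e₁ + q₂·e₁' for smooth functions q₁, q₂ : ℝ → ℝ. Let φ : ℝ → ℝ be a smooth map with φ'(t) > 0 for all t, let a₀ ∈ ℝ³ be a fixed vector, and define the reparametrized data ē₁ = (γ ∘ φ)' and v̄ = (v ∘ φ) + a₀. If q̄₁, q̄₂ : ℝ → ℝ are smooth functions with v̄' = q̄₁·ē₁ + q̄₂·ē₁', then q̄₁(t) − q̄₂'(t) = q₁(φ(t)) − q₂'(φ(t)) for all t. In other words, the invariant I₄ = q₁ − q₂' is unchanged under simultaneously reparametrizing the curve and translating v by a fixed vector (as happens under a parallel translation of the unit sphere of the gauge). -/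
/-- Theorem 5.1: The invariant `I₄ = q₁ − q₂'` is unchanged
when the curve is reparametrized by `φ` (with `φ' > 0`) and `v` is translated
by a fixed vector `a₀` (parallel translation of the unit sphere):
if `v' = q₁·e₁ + q₂·e₁'` with `e₁ = γ'`, and
`v̄' = q̄₁·ē₁ + q̄₂·ē₁'` with `ē₁ = (γ∘φ)'` and `v̄ = v∘φ + a₀`, then
`q̄₁ − q̄₂' = (q₁ − q₂') ∘ φ`. -/
theorem stmt_13 (γ v : ℝ → (Fin 3 → ℝ))
    (hγ : ContDiff ℝ (⊤ : ℕ∞) γ) (hv : ContDiff ℝ (⊤ : ℕ∞) v)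
    (hli : ∀ s, LinearIndependent ℝ ![deriv γ s, deriv (deriv γ) s])
    (q₁ q₂ : ℝ → ℝ)
    (hq₁ : ContDiff ℝ (⊤ : ℕ∞) q₁) (hq₂ : ContDiff ℝ (⊤ : ℕ∞) q₂)
    (hveq : ∀ s, deriv v s = q₁ s • deriv γ s + q₂ s • deriv (deriv γ) s)
    (φ : ℝ → ℝ) (hφ : ContDiff ℝ (⊤ : ℕ∞) φ) (hφ' : ∀ t, 0 < deriv φ t)
    (a₀ : Fin 3 → ℝ)
    (qb₁ qb₂ : ℝ → ℝ)
    (hqb₁ : ContDiff ℝ (⊤ : ℕ∞) qb₁) (hqb₂ : ContDiff ℝ (⊤ : ℕ∞) qb₂)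
    (hvbeq : ∀ t, deriv (fun τ => v (φ τ) + a₀) t
      = qb₁ t • deriv (fun τ => γ (φ τ)) t
        + qb₂ t • deriv (deriv (fun τ => γ (φ τ))) t) :
    ∀ t, qb₁ t - deriv qb₂ t = q₁ (φ t) - deriv q₂ (φ t) := by
  have hγ' : ContDiff ℝ (⊤ : ℕ∞) (deriv γ) := (contDiff_infty_iff_deriv.mp hγ).2
  have hφ'c : ContDiff ℝ (⊤ : ℕ∞) (deriv φ) := (contDiff_infty_iff_deriv.mp hφ).2
  have hφd : ∀ t, HasDerivAt φ (deriv φ t) t :=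
    fun t => (hφ.differentiable (by simp) t).hasDerivAt
  have hφ'd : ∀ t, HasDerivAt (deriv φ) (deriv (deriv φ) t) t :=
    fun t => (hφ'c.differentiable (by simp) t).hasDerivAt
  -- first derivative of γ ∘ φ
  have h1 : ∀ τ, HasDerivAt (fun τ => γ (φ τ)) (deriv φ τ • deriv γ (φ τ)) τ :=
    fun τ => ((hγ.differentiable (by simp) (φ τ)).hasDerivAt).scomp τ (hφd τ)
  have hE : deriv (fun τ => γ (φ τ)) = fun τ => deriv φ τ • deriv γ (φ τ) :=
    funext fun τ => (h1 τ).deriv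
  -- second derivative of γ ∘ φ
  have h2 : ∀ t, HasDerivAt (fun τ => deriv φ τ • deriv γ (φ τ))
      (deriv φ t • (deriv φ t • deriv (deriv γ) (φ t))
        + deriv (deriv φ) t • deriv γ (φ t)) t :=
    fun t => (hφ'd t).smul
      (((hγ'.differentiable (by simp) (φ t)).hasDerivAt).scomp t (hφd t))
  have hE2 : ∀ t, deriv (deriv (fun τ => γ (φ τ))) t
      = deriv φ t • (deriv φ t • deriv (deriv γ) (φ t))
        + deriv (deriv φ) t • deriv γ (φ t) := by
    intro t
    rw [hE]
    exact (h2 t).deriv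
  -- derivative of v ∘ φ + a₀
  have hV : ∀ t, deriv (fun τ => v (φ τ) + a₀) t = deriv φ t • deriv v (φ t) := by
    intro t
    exact ((((hv.differentiable (by simp) (φ t)).hasDerivAt).scomp t (hφd t)).add_const a₀).deriv
  -- coefficient equations from linear independence
  have key : ∀ t, qb₂ t * deriv φ t = q₂ (φ t) ∧
      qb₁ t * deriv φ t + qb₂ t * deriv (deriv φ) t = deriv φ t * q₁ (φ t) := by
    intro t
    have h := hvbeq t
    rw [hV t, hveq (φ t), hE2 t, hE] at h
    have hz : (qb₁ t * deriv φ t + qb₂ t * deriv (deriv φ) t - deriv φ t * q₁ (φ t))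
        • deriv γ (φ t)
        + (qb₂ t * (deriv φ t * deriv φ t) - deriv φ t * q₂ (φ t))
        • deriv (deriv γ) (φ t) = (0 : Fin 3 → ℝ) := by
      have := h.symm
      simp only [smul_add, smul_smul, sub_smul, add_smul] at this ⊢
      abel_nf
      abel_nf at this
      linear_combination (norm := module) this
    have hind := (LinearIndependent.pair_iff.mp (hli (φ t))) _ _ hz
    have hp := (hφ' t).ne'
    constructor
    · have h2 := hind.2
      have : qb₂ t * deriv φ t * deriv φ t = q₂ (φ t) * deriv φ t := by ring_nf; ring_nf at h2; linarith
      exact mul_right_cancel₀ hp this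
    · linarith [hind.1]
  -- differentiate qb₂ * φ' = q₂ ∘ φ
  intro t
  have hd1 : HasDerivAt (fun τ => qb₂ τ * deriv φ τ)
      (deriv qb₂ t * deriv φ t + qb₂ t * deriv (deriv φ) t) t :=
    ((hqb₂.differentiable (by simp) t).hasDerivAt).mul (hφ'd t)
  have hd2 : HasDerivAt (fun τ => q₂ (φ τ)) (deriv φ t * deriv q₂ (φ t)) t := by
    have := (((contDiff_infty_iff_deriv.mp hq₂).1 (φ t)).hasDerivAt).scomp t (hφd t)
    simpa [smul_eq_mul, Function.comp_def] using this
  have heqfun : (fun τ => qb₂ τ * deriv φ τ) = fun τ => q₂ (φ τ) :=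
    funext fun τ => (key τ).1
  have hder : deriv qb₂ t * deriv φ t + qb₂ t * deriv (deriv φ) t
      = deriv φ t * deriv q₂ (φ t) := by
    have := hd1.deriv
    rw [heqfun] at this
    rw [← this, hd2.deriv]
  have hp := (hφ' t).ne'
  have hk := (key t).2
  have hmul : (qb₁ t - deriv qb₂ t) * deriv φ t
      = (q₁ (φ t) - deriv q₂ (φ t)) * deriv φ t := by
    linear_combination hk - hder
  exact mul_right_cancel₀ hp hmul
end

section
/- (Translation formulas for the p-coefficients, Section 5.) Let γ, v : ℝ → ℝ³ be smooth curves, set e₁ = γ', and suppose e₁'' = p₁·e₁ + p₂·e₁' + p₃·v for smooth functions p₁, p₂, p₃ : ℝ → ℝ. Let φ : ℝ → ℝ be smooth with φ' > 0, let f : ℝ → ℝ be a smooth positive function with φ'(t) = f(φ(t)) for all t, let a₀ ∈ ℝ³ be fixed, and set ē₁ = (γ ∘ φ)' and v̄ = (v ∘ φ) + a₀. Then for all t: ē₁''(t) = (f·f'' − 2f'² + p₁·f² − p₂·f·f')(φ(t))·ē₁(t) + (3f' + p₂·f)(φ(t))·ē₁'(t) + (p₃·f³)(φ(t))·(v̄(t)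 − a₀). Consequently, if a₀ = a₀₁·ē₁ + a₀₂·ē₁' + a₀₃·v̄ pointwise, then the new coefficients in ē₁'' = p̄₁·ē₁ + p̄₂·ē₁' + p̄₃·v̄ are p̄₁ = ff'' − 2f'² + p₁f² − p₂ff' − p₃f³·a₀₁, p̄₂ = 3f' + p₂f − p₃f³·a₀₂, and p̄₃ = p₃f³(1 − a₀₃) (coefficients of f and pᵢ evaluated at φ(t)). -/
lemma aux_comp {E : Type*} [NormedAddCommGroup E] [NormedSpace ℝ E]
    {h : ℝ → E} {φ f : ℝ → ℝ} (hh : Differentiable ℝ h)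
    (hφ' : ∀ t, HasDerivAt φ (f (φ t)) t) (t : ℝ) :
    HasDerivAt (fun τ => h (φ τ)) (f (φ t) • deriv h (φ t)) t :=
  (hh (φ t)).hasDerivAt.scomp t (hφ' t)

/-- Section 5, translation formulas for the `p`-coefficients:
with `e₁ = γ'`, `e₁'' = p₁·e₁ + p₂·e₁' + p₃·v`, a reparametrization
`s = φ(t)` with `φ' = f ∘ φ` (`f > 0`), and `ē₁ = (γ∘φ)'`,
`v̄ = v∘φ + a₀`, one has
`ē₁'' = (ff'' − 2f'² + p₁f² − p₂ff')·ē₁ + (3f' + p₂f)·ē₁' + p₃f³·(v̄ − a₀)`;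
and if `a₀ = a₀₁·ē₁ + a₀₂·ē₁' + a₀₃·v̄` pointwise, then
`ē₁'' = p̄₁·ē₁ + p̄₂·ē₁' + p̄₃·v̄` with
`p̄₁ = ff'' − 2f'² + p₁f² − p₂ff' − p₃f³a₀₁`,
`p̄₂ = 3f' + p₂f − p₃f³a₀₂`, `p̄₃ = p₃f³(1 − a₀₃)`. -/
theorem stmt_14 (γ v : ℝ → (Fin 3 → ℝ))
    (hγ : ContDiff ℝ (⊤ : ℕ∞) γ) (hv : ContDiff ℝ (⊤ : ℕ∞) v)
    (p₁ p₂ p₃ : ℝ → ℝ)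
    (hp₁ : ContDiff ℝ (⊤ : ℕ∞) p₁) (hp₂ : ContDiff ℝ (⊤ : ℕ∞) p₂)
    (hp₃ : ContDiff ℝ (⊤ : ℕ∞) p₃)
    (heq : ∀ s, deriv (deriv (deriv γ)) s
      = p₁ s • deriv γ s + p₂ s • deriv (deriv γ) s + p₃ s • v s)
    (φ f : ℝ → ℝ)
    (hφ : ContDiff ℝ (⊤ : ℕ∞) φ) (hf : ContDiff ℝ (⊤ : ℕ∞) f)
    (hfpos : ∀ s, 0 < f s) (hφf : ∀ t, deriv φ t = f (φ t))
    (a₀ : Fin 3 → ℝ) :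
    (∀ t, deriv (deriv (deriv (fun τ => γ (φ τ)))) t
      = (f (φ t) * deriv (deriv f) (φ t) - 2 * (deriv f (φ t)) ^ 2
          + p₁ (φ t) * (f (φ t)) ^ 2
          - p₂ (φ t) * f (φ t) * deriv f (φ t)) • deriv (fun τ => γ (φ τ)) t
        + (3 * deriv f (φ t) + p₂ (φ t) * f (φ t))
            • deriv (deriv (fun τ => γ (φ τ))) t
        + (p₃ (φ t) * (f (φ t)) ^ 3) • ((v (φ t) + a₀) - a₀)) ∧
    (∀ a₀₁ a₀₂ a₀₃ : ℝ → ℝ,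
      (∀ t, a₀ = a₀₁ t • deriv (fun τ => γ (φ τ)) t
          + a₀₂ t • deriv (deriv (fun τ => γ (φ τ))) t
          + a₀₃ t • (v (φ t) + a₀)) →
      ∀ t, deriv (deriv (deriv (fun τ => γ (φ τ)))) t
        = (f (φ t) * deriv (deriv f) (φ t) - 2 * (deriv f (φ t)) ^ 2
            + p₁ (φ t) * (f (φ t)) ^ 2
            - p₂ (φ t) * f (φ t) * deriv f (φ t)
            - p₃ (φ t) * (f (φ t)) ^ 3 * a₀₁ t) • deriv (fun τ => γ (φ τ)) t
          + (3 * deriv f (φ t) + p₂ (φ t) * f (φ t)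
              - p₃ (φ t) * (f (φ t)) ^ 3 * a₀₂ t)
              • deriv (deriv (fun τ => γ (φ τ))) t
          + (p₃ (φ t) * (f (φ t)) ^ 3 * (1 - a₀₃ t)) • (v (φ t) + a₀)) := by
  have hφ' : ∀ t, HasDerivAt φ (f (φ t)) t := fun t => by
    have := ((hφ.differentiable (by simp)) t).hasDerivAt
    rwa [hφf t] at this
  have hγ1 : ContDiff ℝ (⊤ : ℕ∞) (deriv γ) := (contDiff_infty_iff_deriv.mp hγ).2
  have hγ2 : ContDiff ℝ (⊤ : ℕ∞) (deriv (deriv γ)) := (contDiff_infty_iff_deriv.mp hγ1).2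
  have hf1 : ContDiff ℝ (⊤ : ℕ∞) (deriv f) := (contDiff_infty_iff_deriv.mp hf).2
  -- hasDerivAt of compositions
  have hc0 : ∀ t, HasDerivAt (fun τ => f (φ τ)) (f (φ t) • deriv f (φ t)) t :=
    aux_comp (hf.differentiable (by simp)) hφ'
  have hc1 : ∀ t, HasDerivAt (fun τ => deriv f (φ τ)) (f (φ t) • deriv (deriv f) (φ t)) t :=
    aux_comp (hf1.differentiable (by simp)) hφ'
  have hg1 : ∀ t, HasDerivAt (fun τ => deriv γ (φ τ)) (f (φ t) • deriv (deriv γ) (φ t)) t :=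
    aux_comp (hγ1.differentiable (by simp)) hφ'
  have hg2 : ∀ t, HasDerivAt (fun τ => deriv (deriv γ) (φ τ))
      (f (φ t) • deriv (deriv (deriv γ)) (φ t)) t :=
    aux_comp (hγ2.differentiable (by simp)) hφ'
  have hG1 : ∀ t, HasDerivAt (fun τ => γ (φ τ)) (f (φ t) • deriv γ (φ t)) t :=
    aux_comp (hγ.differentiable (by simp)) hφ'
  have dG1 : deriv (fun τ => γ (φ τ)) = fun t => f (φ t) • deriv γ (φ t) :=
    funext fun t => (hG1 t).deriv
  -- second derivative
  have hG2 : ∀ t, HasDerivAt (fun t => f (φ t) • deriv γ (φ t))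
      ((f (φ t) * deriv f (φ t)) • deriv γ (φ t)
        + (f (φ t) * f (φ t)) • deriv (deriv γ) (φ t)) t := by
    intro t
    have := (hc0 t).smul (hg1 t)
    refine this.congr_deriv ?_
    module
  have dG2 : deriv (deriv (fun τ => γ (φ τ)))
      = fun t => (f (φ t) * deriv f (φ t)) • deriv γ (φ t)
        + (f (φ t) * f (φ t)) • deriv (deriv γ) (φ t) := by
    rw [dG1]; exact funext fun t => (hG2 t).deriv
  -- third derivative
  have hG3 : ∀ t, HasDerivAt (fun t => (f (φ t) * deriv f (φ t)) • deriv γ (φ t)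
        + (f (φ t) * f (φ t)) • deriv (deriv γ) (φ t))
      ((f (φ t) * deriv f (φ t)) • (f (φ t) • deriv (deriv γ) (φ t))
        + (f (φ t) • deriv f (φ t) * deriv f (φ t)
            + f (φ t) * (f (φ t) • deriv (deriv f) (φ t))) • deriv γ (φ t)
        + ((f (φ t) * f (φ t)) • (f (φ t) • deriv (deriv (deriv γ)) (φ t))
          + (f (φ t) • deriv f (φ t) * f (φ t)
              + f (φ t) * (f (φ t) • deriv f (φ t))) • deriv (deriv γ) (φ t))) t := by
    intro t
    exact (((hc0 t).mul (hc1 t)).smul (hg1 t)).add (((hc0 t).mul (hc0 t)).smul (hg2 t))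
  have dG3 : ∀ t, deriv (deriv (deriv (fun τ => γ (φ τ)))) t
      = (f (φ t) * deriv f (φ t)) • (f (φ t) • deriv (deriv γ) (φ t))
        + (f (φ t) • deriv f (φ t) * deriv f (φ t)
            + f (φ t) * (f (φ t) • deriv (deriv f) (φ t))) • deriv γ (φ t)
        + ((f (φ t) * f (φ t)) • (f (φ t) • deriv (deriv (deriv γ)) (φ t))
          + (f (φ t) • deriv f (φ t) * f (φ t)
              + f (φ t) * (f (φ t) • deriv f (φ t))) • deriv (deriv γ) (φ t)) := by
    intro t
    rw [dG2]; exact (hG3 t).deriv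
  have part1 : ∀ t, deriv (deriv (deriv (fun τ => γ (φ τ)))) t
      = (f (φ t) * deriv (deriv f) (φ t) - 2 * (deriv f (φ t)) ^ 2
          + p₁ (φ t) * (f (φ t)) ^ 2
          - p₂ (φ t) * f (φ t) * deriv f (φ t)) • deriv (fun τ => γ (φ τ)) t
        + (3 * deriv f (φ t) + p₂ (φ t) * f (φ t))
            • deriv (deriv (fun τ => γ (φ τ))) t
        + (p₃ (φ t) * (f (φ t)) ^ 3) • ((v (φ t) + a₀) - a₀) := by
    intro t
    rw [dG3 t, dG2, dG1, heq (φ t)]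
    simp only [smul_eq_mul]
    module
  refine ⟨part1, fun a₀₁ a₀₂ a₀₃ ha₀ t => ?_⟩
  rw [part1 t]
  have key : (p₃ (φ t) * (f (φ t)) ^ 3) • a₀
      = (p₃ (φ t) * (f (φ t)) ^ 3) • (a₀₁ t • deriv (fun τ => γ (φ τ)) t)
        + (p₃ (φ t) * (f (φ t)) ^ 3) • (a₀₂ t • deriv (deriv (fun τ => γ (φ τ))) t)
        + (p₃ (φ t) * (f (φ t)) ^ 3) • (a₀₃ t • (v (φ t) + a₀)) := by
    conv_lhs => rw [ha₀ t]
    module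
  rw [smul_sub, key]
  module
end

section
/- (Birkhoff-orthogonal vector in the Randers space.) Fix 0 < b < 1 and define G : ℝ³ → ℝ by G(x₁, x₂, x₃) = (1 − b²)(x₁² + x₂²) + ((1 − b²)x₃ + b)². Let y = (y₁, y₂, y₃) ∈ ℝ³ be nonzero, set D = √((1 − b²)(y₁² + y₂²) + y₃²), and define v = (y₁/D, y₂/D, (1/(1 − b²))(y₃/D − b)). Then G(v) = 1 and there exists λ > 0 such that the gradient of G at v equals λ·y. -/
set_option maxHeartbeats 1000000


/-- Birkhoff-orthogonal vector in the Randers space: for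
`G(x) = (1−b²)(x₁²+x₂²) + ((1−b²)x₃+b)²`, nonzero `y`, and
`D = √((1−b²)(y₁²+y₂²)+y₃²)`, the vector
`v = (y₁/D, y₂/D, (1/(1−b²))(y₃/D − b))` satisfies `G(v) = 1` and
`grad G |_v = λ·y` for some `λ > 0`. -/
theorem stmt_15 (b : ℝ) (hb0 : 0 < b) (hb1 : b < 1)
    (G : EuclideanSpace ℝ (Fin 3) → ℝ)
    (hG : ∀ x, G x = (1 - b ^ 2) * ((x 0) ^ 2 + (x 1) ^ 2)
      + ((1 - b ^ 2) * x 2 + b) ^ 2)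
    (y : EuclideanSpace ℝ (Fin 3)) (hy : y ≠ 0)
    (D : ℝ)
    (hD : D = Real.sqrt ((1 - b ^ 2) * ((y 0) ^ 2 + (y 1) ^ 2) + (y 2) ^ 2))
    (v : EuclideanSpace ℝ (Fin 3))
    (hv0 : v 0 = y 0 / D) (hv1 : v 1 = y 1 / D)
    (hv2 : v 2 = (1 / (1 - b ^ 2)) * (y 2 / D - b)) :
    G v = 1 ∧ ∃ lam : ℝ, 0 < lam ∧ gradient G v = lam • y := by
  have hc : (0:ℝ) < 1 - b ^ 2 := by nlinarith
  -- positivity of the expression under sqrt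
  have hyi : ∃ i, y i ≠ 0 := by
    by_contra h
    push_neg at h
    apply hy
    ext i
    exact h i
  have harg : 0 < (1 - b ^ 2) * ((y 0) ^ 2 + (y 1) ^ 2) + (y 2) ^ 2 := by
    obtain ⟨i, hi⟩ := hyi
    fin_cases i <;> simp at hi <;> nlinarith [sq_nonneg (y 0), sq_nonneg (y 1), sq_nonneg (y 2), sq_pos_of_ne_zero hi]
  have hDpos : 0 < D := hD ▸ Real.sqrt_pos.mpr harg
  have hD2 : D ^ 2 = (1 - b ^ 2) * ((y 0) ^ 2 + (y 1) ^ 2) + (y 2) ^ 2 := by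
    rw [hD, Real.sq_sqrt harg.le]
  have hDne : D ≠ 0 := hDpos.ne'
  have hcne : (1 - b ^ 2) ≠ 0 := hc.ne'
  have key2 : (1 - b ^ 2) * v 2 + b = y 2 / D := by
    rw [hv2]; field_simp; ring
  constructor
  · rw [hG v, hv0, hv1, key2]
    field_simp
    linarith [hD2]
  · refine ⟨2 * (1 - b ^ 2) / D, by positivity, ?_⟩
    have hG' : HasGradientAt G ((2 * (1 - b ^ 2) / D) • y) v := by
      rw [hasGradientAt_iff_hasFDerivAt]
      have hp : ∀ i : Fin 3, HasFDerivAt (fun x : EuclideanSpace ℝ (Fin 3) => x i)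
          (EuclideanSpace.proj i : EuclideanSpace ℝ (Fin 3) →L[ℝ] ℝ) v := by
        intro i
        have h := (EuclideanSpace.proj (𝕜 := ℝ) i).hasFDerivAt (x := v)
        have he : ⇑(EuclideanSpace.proj (𝕜 := ℝ) (ι := Fin 3) i)
            = fun x : EuclideanSpace ℝ (Fin 3) => x i := by
          funext x; simp
        rwa [he] at h
      have m0 : HasFDerivAt (fun x : EuclideanSpace ℝ (Fin 3) => x 0 * x 0)
          (v 0 • (EuclideanSpace.proj 0 : EuclideanSpace ℝ (Fin 3) →L[ℝ] ℝ)
            + v 0 • EuclideanSpace.proj 0) v := (hp 0).mul (hp 0)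
      have m1 : HasFDerivAt (fun x : EuclideanSpace ℝ (Fin 3) => x 1 * x 1)
          (v 1 • (EuclideanSpace.proj 1 : EuclideanSpace ℝ (Fin 3) →L[ℝ] ℝ)
            + v 1 • EuclideanSpace.proj 1) v := (hp 1).mul (hp 1)
      have q : HasFDerivAt (fun x : EuclideanSpace ℝ (Fin 3) => (1 - b ^ 2) * x 2 + b)
          ((1 - b ^ 2) • (EuclideanSpace.proj 2 : EuclideanSpace ℝ (Fin 3) →L[ℝ] ℝ)) v :=
        ((hp 2).const_mul (1 - b ^ 2)).add_const b
      have m2 : HasFDerivAt (fun x : EuclideanSpace ℝ (Fin 3) =>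
            ((1 - b ^ 2) * x 2 + b) * ((1 - b ^ 2) * x 2 + b))
          (((1 - b ^ 2) * v 2 + b) • ((1 - b ^ 2) •
              (EuclideanSpace.proj 2 : EuclideanSpace ℝ (Fin 3) →L[ℝ] ℝ))
            + ((1 - b ^ 2) * v 2 + b) • ((1 - b ^ 2) • EuclideanSpace.proj 2)) v := q.mul q
      have hfd : HasFDerivAt G
          ((1 - b ^ 2) • ((v 0 • (EuclideanSpace.proj 0 : EuclideanSpace ℝ (Fin 3) →L[ℝ] ℝ)
              + v 0 • EuclideanSpace.proj 0)
            + (v 1 • (EuclideanSpace.proj 1 : EuclideanSpace ℝ (Fin 3) →L[ℝ] ℝ)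
              + v 1 • EuclideanSpace.proj 1))
           + (((1 - b ^ 2) * v 2 + b) • ((1 - b ^ 2) •
                (EuclideanSpace.proj 2 : EuclideanSpace ℝ (Fin 3) →L[ℝ] ℝ))
              + ((1 - b ^ 2) * v 2 + b) • ((1 - b ^ 2) • EuclideanSpace.proj 2))) v := by
        have hGeq : G = fun x : EuclideanSpace ℝ (Fin 3) =>
            (1 - b ^ 2) * (x 0 * x 0 + x 1 * x 1)
              + ((1 - b ^ 2) * x 2 + b) * ((1 - b ^ 2) * x 2 + b) := by
          funext x; rw [hG x]; ring
        rw [hGeq]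
        exact ((m0.add m1).const_mul (1 - b ^ 2)).add m2
      refine hfd.congr_fderiv ?_
      refine ContinuousLinearMap.ext fun h => ?_
      simp [InnerProductSpace.toDual_apply_apply, PiLp.inner_apply, Fin.sum_univ_three,
        hv0, hv1, key2]
      ring
    exact hG'.gradient
end

section
/- (Example 1.) Fix 0 < b < 1 and let F(x₁, x₂, x₃) = √(x₁² + x₂² + x₃²) + b·x₃. Define γ : ℝ → ℝ³ by γ(t) = (1/(√2 + b))·(cos t, sin t, t), set e₁ = γ', and define v : ℝ → ℝ³ by v(t) = (sin t/√(2 − b²), −cos t/√(2 − b²), (1/(1 − b²))(1/√(2 − b²) − b)). Then: (a) F(γ'(t)) = 1 for all t (so t is the arc-length parameter); (b) v'(t) = −((√2 + b)/√(2 − b²))·e₁'(t) for all t; (c) e₁''(t) = −((√(2 − b²) − b)/(2√(2 − b²)))·e₁(t) + ((√(2 − b²) + b)/(2(√2 + b)))·v(t) for all t. Consequently, the invariants of γ are the constants I₁ = (√(2 − b²) + b)/(2(√2 + b)), I₂ = 0, I₃ = 1, and I₄ = 0. -/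
/-- Example 1: in the Randers space with
`F(x) = √(x₁²+x₂²+x₃²) + b·x₃`, the curve
`γ(t) = (1/(√2+b))·(cos t, sin t, t)` is unit speed (`F(γ') = 1`), and with
`v(t) = (sin t/√(2−b²), −cos t/√(2−b²), (1/(1−b²))(1/√(2−b²) − b))` one has
`v' = −((√2+b)/√(2−b²))·e₁'` and
`e₁'' = −((√(2−b²)−b)/(2√(2−b²)))·e₁ + ((√(2−b²)+b)/(2(√2+b)))·v`.
Consequently the invariants are the constants
`I₁ = (√(2−b²)+b)/(2(√2+b))`, `I₂ = 0`, `I₃ = −p₁ − p₃q₂ = 1`,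
`I₄ = q₁ − q₂' = 0`. -/
theorem stmt_16 (b : ℝ) (hb0 : 0 < b) (hb1 : b < 1)
    (F : (Fin 3 → ℝ) → ℝ)
    (hF : ∀ x, F x = Real.sqrt ((x 0) ^ 2 + (x 1) ^ 2 + (x 2) ^ 2) + b * x 2)
    (γ v : ℝ → (Fin 3 → ℝ))
    (hγ : ∀ t, γ t = (Real.sqrt 2 + b)⁻¹ • ![Real.cos t, Real.sin t, t])
    (hv : ∀ t, v t = ![Real.sin t / Real.sqrt (2 - b ^ 2),
      -Real.cos t / Real.sqrt (2 - b ^ 2),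
      (1 / (1 - b ^ 2)) * (1 / Real.sqrt (2 - b ^ 2) - b)]) :
    (∀ t, F (deriv γ t) = 1) ∧
    (∀ t, deriv v t
      = (-((Real.sqrt 2 + b) / Real.sqrt (2 - b ^ 2))) • deriv (deriv γ) t) ∧
    (∀ t, deriv (deriv (deriv γ)) t
      = (-((Real.sqrt (2 - b ^ 2) - b) / (2 * Real.sqrt (2 - b ^ 2)))) • deriv γ t
        + ((Real.sqrt (2 - b ^ 2) + b) / (2 * (Real.sqrt 2 + b))) • v t) ∧
    (-(-((Real.sqrt (2 - b ^ 2) - b) / (2 * Real.sqrt (2 - b ^ 2))))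
      - ((Real.sqrt (2 - b ^ 2) + b) / (2 * (Real.sqrt 2 + b)))
        * (-((Real.sqrt 2 + b) / Real.sqrt (2 - b ^ 2))) = 1) ∧
    (∀ t : ℝ, (0 : ℝ)
      - deriv (fun _ : ℝ => -((Real.sqrt 2 + b) / Real.sqrt (2 - b ^ 2))) t
      = 0) := by

  have hb2 : (0:ℝ) < 2 - b ^ 2 := by nlinarith
  have hb3 : (0:ℝ) < 1 - b ^ 2 := by nlinarith
  set s := Real.sqrt (2 - b ^ 2) with hsdef
  set c := Real.sqrt 2 + b with hcdef
  have hs0 : 0 < s := Real.sqrt_pos.2 hb2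
  have hs2 : s ^ 2 = 2 - b ^ 2 := Real.sq_sqrt hb2.le
  have h20 : (0:ℝ) < Real.sqrt 2 := Real.sqrt_pos.2 (by norm_num)
  have hc0 : 0 < c := by rw [hcdef]; linarith
  have h22 : Real.sqrt 2 ^ 2 = 2 := Real.sq_sqrt (by norm_num)
  have hγe : γ = fun t => c⁻¹ • ![Real.cos t, Real.sin t, t] := funext hγ
  have d1 : ∀ t, HasDerivAt γ (c⁻¹ • ![-Real.sin t, Real.cos t, 1]) t := by
    intro t
    rw [hγe]
    refine HasDerivAt.const_smul c⁻¹ (f := fun t => ![Real.cos t, Real.sin t, t]) ?_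
    rw [hasDerivAt_pi]
    intro i
    fin_cases i <;>
      simp only [Matrix.cons_val_zero, Matrix.cons_val_one, Matrix.head_cons,
        Fin.mk_zero, Fin.mk_one, Matrix.cons_val_two, Matrix.tail_cons, Fin.reduceFinMk]
    · exact Real.hasDerivAt_cos t
    · exact Real.hasDerivAt_sin t
    · exact hasDerivAt_id t
  have e1 : deriv γ = fun t => c⁻¹ • ![-Real.sin t, Real.cos t, 1] :=
    funext fun t => (d1 t).deriv
  have d2 : ∀ t, HasDerivAt (deriv γ) (c⁻¹ • ![-Real.cos t, -Real.sin t, 0]) t := by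
    intro t
    rw [e1]
    refine HasDerivAt.const_smul c⁻¹ (f := fun t => ![-Real.sin t, Real.cos t, 1]) ?_
    rw [hasDerivAt_pi]
    intro i
    fin_cases i <;>
      simp only [Matrix.cons_val_zero, Matrix.cons_val_one, Matrix.head_cons,
        Fin.mk_zero, Fin.mk_one, Matrix.cons_val_two, Matrix.tail_cons, Fin.reduceFinMk]
    · exact (Real.hasDerivAt_sin t).neg
    · exact Real.hasDerivAt_cos t
    · exact hasDerivAt_const t 1
  have e2 : deriv (deriv γ) = fun t => c⁻¹ • ![-Real.cos t, -Real.sin t, 0] :=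
    funext fun t => (d2 t).deriv
  have d3 : ∀ t, HasDerivAt (deriv (deriv γ)) (c⁻¹ • ![Real.sin t, -Real.cos t, 0]) t := by
    intro t
    rw [e2]
    refine HasDerivAt.const_smul c⁻¹ (f := fun t => ![-Real.cos t, -Real.sin t, 0]) ?_
    rw [hasDerivAt_pi]
    intro i
    fin_cases i <;>
      simp only [Matrix.cons_val_zero, Matrix.cons_val_one, Matrix.head_cons,
        Fin.mk_zero, Fin.mk_one, Matrix.cons_val_two, Matrix.tail_cons, Fin.reduceFinMk]
    · simpa using (Real.hasDerivAt_cos t).fun_neg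
    · exact (Real.hasDerivAt_sin t).neg
    · exact hasDerivAt_const t 0
  have e3 : deriv (deriv (deriv γ)) = fun t => c⁻¹ • ![Real.sin t, -Real.cos t, 0] :=
    funext fun t => (d3 t).deriv
  have dv : ∀ t, HasDerivAt v (![Real.cos t / s, Real.sin t / s, 0]) t := by
    intro t
    rw [funext hv]
    rw [hasDerivAt_pi]
    intro i
    fin_cases i <;>
      simp only [Matrix.cons_val_zero, Matrix.cons_val_one, Matrix.head_cons,
        Fin.mk_zero, Fin.mk_one, Matrix.cons_val_two, Matrix.tail_cons, Fin.reduceFinMk]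
    · exact (Real.hasDerivAt_sin t).div_const s
    · simpa [neg_div] using ((Real.hasDerivAt_cos t).neg).div_const s
    · exact hasDerivAt_const t _
  have ev : deriv v = fun t => ![Real.cos t / s, Real.sin t / s, 0] :=
    funext fun t => (dv t).deriv
  refine ⟨?_, ?_, ?_, ?_, ?_⟩
  · intro t
    rw [hF, e1]
    simp only [Pi.smul_apply, Matrix.cons_val_zero, Matrix.cons_val_one, Matrix.head_cons,
      Matrix.cons_val_two, Matrix.tail_cons, smul_eq_mul]
    have hsum : (c⁻¹ * -Real.sin t) ^ 2 + (c⁻¹ * Real.cos t) ^ 2 + (c⁻¹ * 1) ^ 2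
        = c⁻¹ ^ 2 * 2 := by
      nlinarith [Real.sin_sq_add_cos_sq t]
    rw [hsum, Real.sqrt_mul (sq_nonneg _), Real.sqrt_sq (inv_nonneg.2 hc0.le)]
    field_simp
    exact hcdef.symm
  · intro t
    rw [ev, e2]
    funext i
    fin_cases i <;>
      simp only [Pi.smul_apply, Matrix.cons_val_zero, Matrix.cons_val_one, Matrix.head_cons,
        Matrix.cons_val_two, Matrix.tail_cons, smul_eq_mul, Fin.reduceFinMk] <;>
      field_simp <;> ring
  · intro t
    rw [e3, e1, hv]
    funext i
    fin_cases i <;>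
      simp only [Pi.add_apply, Pi.smul_apply, Matrix.cons_val_zero, Matrix.cons_val_one,
        Matrix.head_cons, Matrix.cons_val_two, Matrix.tail_cons, smul_eq_mul, Fin.reduceFinMk]
    · field_simp
      ring
    · field_simp
      ring
    · field_simp
      linear_combination b * hs2
  · field_simp
    ring
  · intro t
    simp
end

section
/- (Example 4.) Fix 0 < b < 1 and define g : ℝ → ℝ by g(t) = √(1 − b² sin²t) − b·cos t, and γ : ℝ → ℝ³ by γ(t) = (1/(1 − b²))·(0, √(1 − b²)·cos t, sin t). Then: (a) g(t) = (1 − b²)/(√(1 − b² sin²t) + b·cos t) > 0 for all t; (b) with F(x₁, x₂, x₃) = √(x₁² + x₂² + x₃²) + b·x₃, one has F(γ'(t)) = 1/g(t) for all t; (c) if ψ : ℝ → ℝ is smooth with ψ'(σ) = g(ψ(σ)) for all σ (the inverse of the arc-length reparametrization) and E₁(σ) = g(ψ(σ))·γ'(ψ(σ)), then E₁''(σ) = (g·g'' − g² − 2g'²)(ψ(σ))·E₁(σ) + 3g'(ψ(σ))·E₁'(σ) for all σ, so the invariant I₂ of γ with respect to F equals 3g'(ψ(σ)), which is not identically zero.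 -/
open Real

private lemma hasDerivAt_congr_deriv {E : Type*} [NormedAddCommGroup E] [NormedSpace ℝ E]
    {f : ℝ → E} {v w : E} {x : ℝ} (h : HasDerivAt f v x) (e : v = w) : HasDerivAt f w x :=
  e ▸ h

private noncomputable def stmtAv (b : ℝ) : Fin 3 → ℝ := ![0, Real.sqrt (1 - b ^ 2) / (1 - b ^ 2), 0]
private noncomputable def stmtBv (b : ℝ) : Fin 3 → ℝ := ![0, 0, (1 - b ^ 2)⁻¹]

/-- Example 4: with `g(t) = √(1−b²sin²t) − b·cos t` and
`γ(t) = (1/(1−b²))·(0, √(1−b²)·cos t, sin t)`: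
(a) `g(t) = (1−b²)/(√(1−b²sin²t) + b·cos t) > 0`;
(b) `F(γ'(t)) = 1/g(t)` for the Randers norm `F`;
(c) if `ψ' = g ∘ ψ` and `E₁(σ) = g(ψ(σ))·γ'(ψ(σ))`, then
`E₁'' = (gg'' − g² − 2g'²)(ψ)·E₁ + 3g'(ψ)·E₁'`, so the invariant
`I₂ = 3g'(ψ(σ))`, which is not identically zero. -/
theorem stmt_17 (b : ℝ) (hb0 : 0 < b) (hb1 : b < 1)
    (F : (Fin 3 → ℝ) → ℝ)
    (hF : ∀ x, F x = Real.sqrt ((x 0) ^ 2 + (x 1) ^ 2 + (x 2) ^ 2) + b * x 2)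
    (g : ℝ → ℝ)
    (hg : ∀ t, g t = Real.sqrt (1 - b ^ 2 * Real.sin t ^ 2) - b * Real.cos t)
    (γ : ℝ → (Fin 3 → ℝ))
    (hγ : ∀ t, γ t = (1 - b ^ 2)⁻¹
      • ![0, Real.sqrt (1 - b ^ 2) * Real.cos t, Real.sin t]) :
    (∀ t, g t = (1 - b ^ 2) / (Real.sqrt (1 - b ^ 2 * Real.sin t ^ 2)
      + b * Real.cos t) ∧ 0 < g t) ∧
    (∀ t, F (deriv γ t) = 1 / g t) ∧
    (∀ ψ : ℝ → ℝ, ContDiff ℝ (⊤ : ℕ∞) ψ → (∀ σ, deriv ψ σ = g (ψ σ)) →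
      ∀ E₁ : ℝ → (Fin 3 → ℝ), (∀ σ, E₁ σ = g (ψ σ) • deriv γ (ψ σ)) →
      (∀ σ, deriv (deriv E₁) σ
        = (g (ψ σ) * deriv (deriv g) (ψ σ) - (g (ψ σ)) ^ 2
            - 2 * (deriv g (ψ σ)) ^ 2) • E₁ σ
          + (3 * deriv g (ψ σ)) • deriv E₁ σ) ∧
      (∃ σ, 3 * deriv g (ψ σ) ≠ 0)) := by
  have hb2 : (0:ℝ) < 1 - b ^ 2 := by nlinarith
  have hq : ∀ t : ℝ, 0 < 1 - b ^ 2 * Real.sin t ^ 2 := by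
    intro t
    nlinarith [Real.sin_sq_add_cos_sq t, sq_nonneg (Real.cos t)]
  have hSpos : ∀ t : ℝ, 0 < Real.sqrt (1 - b ^ 2 * Real.sin t ^ 2) :=
    fun t => Real.sqrt_pos.2 (hq t)
  have hS2 : ∀ t : ℝ, Real.sqrt (1 - b ^ 2 * Real.sin t ^ 2) ^ 2
      = 1 - b ^ 2 * Real.sin t ^ 2 := fun t => Real.sq_sqrt (hq t).le
  have key : ∀ t : ℝ, Real.sqrt (1 - b ^ 2 * Real.sin t ^ 2) ^ 2
      - (b * Real.cos t) ^ 2 = 1 - b ^ 2 := by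
    intro t; rw [hS2 t]; nlinarith [Real.sin_sq_add_cos_sq t]
  have hden : ∀ t : ℝ, 0 < Real.sqrt (1 - b ^ 2 * Real.sin t ^ 2) + b * Real.cos t := by
    intro t; nlinarith [key t, hSpos t]
  have hgpos : ∀ t, 0 < g t := by
    intro t; rw [hg t]; nlinarith [key t, hden t]
  have parta : ∀ t, g t = (1 - b ^ 2)
      / (Real.sqrt (1 - b ^ 2 * Real.sin t ^ 2) + b * Real.cos t) := by
    intro t
    rw [hg t, eq_div_iff (hden t).ne']
    linear_combination key t
  -- structure of γ
  have hγfun : γ = fun t => Real.cos t • stmtAv b + Real.sin t • stmtBv b := by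
    funext t
    rw [hγ t]
    funext i
    fin_cases i <;>
      simp [stmtAv, stmtBv, Matrix.smul_cons, Matrix.smul_empty] <;>
      ring
  have hdγ : ∀ t, HasDerivAt γ ((-Real.sin t) • stmtAv b + Real.cos t • stmtBv b) t := by
    intro t
    rw [hγfun]
    exact ((Real.hasDerivAt_cos t).smul_const (stmtAv b)).add
      ((Real.hasDerivAt_sin t).smul_const (stmtBv b))
  have hDγ : ∀ t, deriv γ t = (-Real.sin t) • stmtAv b + Real.cos t • stmtBv b :=
    fun t => (hdγ t).deriv
  -- part b
  have partb : ∀ t, F (deriv γ t) = 1 / g t := by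
    intro t
    rw [hF, hDγ t]
    have e0 : ((-Real.sin t) • stmtAv b + Real.cos t • stmtBv b) 0 = 0 := by
      simp [stmtAv, stmtBv]
    have e1 : ((-Real.sin t) • stmtAv b + Real.cos t • stmtBv b) 1
        = -Real.sin t * (Real.sqrt (1 - b ^ 2) / (1 - b ^ 2)) := by
      simp [stmtAv, stmtBv]
    have e2 : ((-Real.sin t) • stmtAv b + Real.cos t • stmtBv b) 2
        = Real.cos t * (1 - b ^ 2)⁻¹ := by
      simp [stmtAv, stmtBv]
    rw [e0, e1, e2]
    have harg : (0:ℝ) ^ 2 + (-Real.sin t * (Real.sqrt (1 - b ^ 2) / (1 - b ^ 2))) ^ 2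
        + (Real.cos t * (1 - b ^ 2)⁻¹) ^ 2
        = ((1 - b ^ 2)⁻¹) ^ 2 * (1 - b ^ 2 * Real.sin t ^ 2) := by
      have h1 : Real.sqrt (1 - b ^ 2) ^ 2 = 1 - b ^ 2 := Real.sq_sqrt hb2.le
      have h2 := Real.sin_sq_add_cos_sq t
      field_simp
      nlinarith [h1, h2, sq_nonneg (Real.sin t), sq_nonneg (Real.cos t)]
    rw [harg, Real.sqrt_mul (sq_nonneg _), Real.sqrt_sq (inv_nonneg.2 hb2.le), parta t]
    rw [one_div_div]
    field_simp
  refine ⟨fun t => ⟨parta t, hgpos t⟩, partb, ?_⟩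
  intro ψ hψC hψ' E₁ hE₁
  -- smoothness of g
  have hgfun : g = fun t => Real.sqrt (1 - b ^ 2 * Real.sin t ^ 2) - b * Real.cos t :=
    funext hg
  have hqC : ContDiff ℝ (⊤ : ℕ∞) (fun t : ℝ => 1 - b ^ 2 * Real.sin t ^ 2) :=
    contDiff_const.sub (contDiff_const.mul (Real.contDiff_sin.pow 2))
  have hgC : ContDiff ℝ (⊤ : ℕ∞) g := by
    rw [hgfun]
    refine ContDiff.sub ?_ (contDiff_const.mul Real.contDiff_cos)
    refine contDiff_iff_contDiffAt.2 fun t => ?_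
    exact (Real.contDiffAt_sqrt (hq t).ne').comp t hqC.contDiffAt
  have hgd : Differentiable ℝ g := hgC.differentiable (by simp)
  have hg'C : ContDiff ℝ (⊤ : ℕ∞) (deriv g) := (contDiff_infty_iff_deriv.mp hgC).2
  have hg'd : Differentiable ℝ (deriv g) := hg'C.differentiable (by simp)
  have hψd : Differentiable ℝ ψ := hψC.differentiable (by simp)
  have hψσ : ∀ σ, HasDerivAt ψ (g (ψ σ)) σ := fun σ => hψ' σ ▸ (hψd σ).hasDerivAt
  have hc : ∀ σ, HasDerivAt (fun σ => Real.cos (ψ σ)) (-Real.sin (ψ σ) * g (ψ σ)) σ :=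
    fun σ => (Real.hasDerivAt_cos (ψ σ)).comp σ (hψσ σ)
  have hs : ∀ σ, HasDerivAt (fun σ => Real.sin (ψ σ)) (Real.cos (ψ σ) * g (ψ σ)) σ :=
    fun σ => (Real.hasDerivAt_sin (ψ σ)).comp σ (hψσ σ)
  have hG : ∀ σ, HasDerivAt (fun σ => g (ψ σ)) (deriv g (ψ σ) * g (ψ σ)) σ :=
    fun σ => ((hgd (ψ σ)).hasDerivAt).comp σ (hψσ σ)
  have hG' : ∀ σ, HasDerivAt (fun σ => deriv g (ψ σ))
      (deriv (deriv g) (ψ σ) * g (ψ σ)) σ :=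
    fun σ => ((hg'd (ψ σ)).hasDerivAt).comp σ (hψσ σ)
  -- explicit form of E₁
  have hE₁fun : E₁ = fun σ => (-(g (ψ σ) * Real.sin (ψ σ))) • stmtAv b
      + (g (ψ σ) * Real.cos (ψ σ)) • stmtBv b := by
    funext σ
    rw [hE₁ σ, hDγ (ψ σ)]
    module
  -- first derivative of E₁
  have hMs : ∀ σ, HasDerivAt (fun σ => g (ψ σ) * Real.sin (ψ σ))
      (deriv g (ψ σ) * g (ψ σ) * Real.sin (ψ σ)
        + g (ψ σ) * g (ψ σ) * Real.cos (ψ σ)) σ :=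
    fun σ => hasDerivAt_congr_deriv ((hG σ).mul (hs σ)) (by ring)
  have hMc : ∀ σ, HasDerivAt (fun σ => g (ψ σ) * Real.cos (ψ σ))
      (deriv g (ψ σ) * g (ψ σ) * Real.cos (ψ σ)
        - g (ψ σ) * g (ψ σ) * Real.sin (ψ σ)) σ :=
    fun σ => hasDerivAt_congr_deriv ((hG σ).mul (hc σ)) (by ring)
  have hE₁' : ∀ σ, HasDerivAt E₁
      ((-(deriv g (ψ σ) * g (ψ σ) * Real.sin (ψ σ)
          + g (ψ σ) * g (ψ σ) * Real.cos (ψ σ))) • stmtAv b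
        + (deriv g (ψ σ) * g (ψ σ) * Real.cos (ψ σ)
          - g (ψ σ) * g (ψ σ) * Real.sin (ψ σ)) • stmtBv b) σ := by
    intro σ
    rw [hE₁fun]
    exact ((hMs σ).neg.smul_const (stmtAv b)).add ((hMc σ).smul_const (stmtBv b))
  have hDE₁ : deriv E₁ = fun σ =>
      (-(deriv g (ψ σ) * g (ψ σ) * Real.sin (ψ σ)
          + g (ψ σ) * g (ψ σ) * Real.cos (ψ σ))) • stmtAv b
        + (deriv g (ψ σ) * g (ψ σ) * Real.cos (ψ σ)
          - g (ψ σ) * g (ψ σ) * Real.sin (ψ σ)) • stmtBv b :=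
    funext fun σ => (hE₁' σ).deriv
  -- second derivative coefficients
  have hMs' : ∀ σ, HasDerivAt (fun σ => deriv g (ψ σ) * g (ψ σ) * Real.sin (ψ σ)
        + g (ψ σ) * g (ψ σ) * Real.cos (ψ σ))
      ((deriv (deriv g) (ψ σ) * g (ψ σ) * g (ψ σ)
          + deriv g (ψ σ) * deriv g (ψ σ) * g (ψ σ)) * Real.sin (ψ σ)
        + 3 * (g (ψ σ) * g (ψ σ) * deriv g (ψ σ)) * Real.cos (ψ σ)
        - g (ψ σ) * g (ψ σ) * g (ψ σ) * Real.sin (ψ σ)) σ :=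
    fun σ => hasDerivAt_congr_deriv
      ((((hG' σ).mul (hG σ)).mul (hs σ)).add (((hG σ).mul (hG σ)).mul (hc σ)))
      (by simp only [Pi.mul_apply]; ring)
  have hMc' : ∀ σ, HasDerivAt (fun σ => deriv g (ψ σ) * g (ψ σ) * Real.cos (ψ σ)
        - g (ψ σ) * g (ψ σ) * Real.sin (ψ σ))
      ((deriv (deriv g) (ψ σ) * g (ψ σ) * g (ψ σ)
          + deriv g (ψ σ) * deriv g (ψ σ) * g (ψ σ)) * Real.cos (ψ σ)
        - 3 * (g (ψ σ) * g (ψ σ) * deriv g (ψ σ)) * Real.sin (ψ σ)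
        - g (ψ σ) * g (ψ σ) * g (ψ σ) * Real.cos (ψ σ)) σ :=
    fun σ => hasDerivAt_congr_deriv
      ((((hG' σ).mul (hG σ)).mul (hc σ)).sub (((hG σ).mul (hG σ)).mul (hs σ)))
      (by simp only [Pi.mul_apply]; ring)
  constructor
  · intro σ
    have hD2 : HasDerivAt (deriv E₁)
        ((-((deriv (deriv g) (ψ σ) * g (ψ σ) * g (ψ σ)
              + deriv g (ψ σ) * deriv g (ψ σ) * g (ψ σ)) * Real.sin (ψ σ)
            + 3 * (g (ψ σ) * g (ψ σ) * deriv g (ψ σ)) * Real.cos (ψ σ)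
            - g (ψ σ) * g (ψ σ) * g (ψ σ) * Real.sin (ψ σ))) • stmtAv b
          + ((deriv (deriv g) (ψ σ) * g (ψ σ) * g (ψ σ)
              + deriv g (ψ σ) * deriv g (ψ σ) * g (ψ σ)) * Real.cos (ψ σ)
            - 3 * (g (ψ σ) * g (ψ σ) * deriv g (ψ σ)) * Real.sin (ψ σ)
            - g (ψ σ) * g (ψ σ) * g (ψ σ) * Real.cos (ψ σ)) • stmtBv b) σ := by
      rw [hDE₁]
      exact ((hMs' σ).neg.smul_const (stmtAv b)).add ((hMc' σ).smul_const (stmtBv b))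
    rw [hD2.deriv, hDE₁, hE₁fun]
    match_scalars <;> ring
  · -- existence of σ with ψ σ = π / 2
    have hglb : ∀ t, 1 - b ≤ g t := by
      intro t
      have h1 : Real.sqrt (1 - b ^ 2 * Real.sin t ^ 2) ≤ 1 :=
        Real.sqrt_le_one.2 (by nlinarith [sq_nonneg (Real.sin t)])
      rw [parta t, le_div_iff₀ (hden t)]
      nlinarith [hb0,
        mul_nonneg (by linarith : (0:ℝ) ≤ 1 - b)
          (by linarith : (0:ℝ) ≤ 1 - Real.sqrt (1 - b ^ 2 * Real.sin t ^ 2)),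
        mul_nonneg (by linarith : (0:ℝ) ≤ 1 - b)
          (by linarith [Real.cos_le_one t] : (0:ℝ) ≤ 1 - Real.cos t)]
    have hψlb : ∀ σ, 1 - b ≤ deriv ψ σ := fun σ => (hψ' σ) ▸ hglb (ψ σ)
    have hgrow := mul_sub_le_image_sub_of_le_deriv hψd hψlb
    have hb1' : (0:ℝ) < 1 - b := by linarith
    set c : ℝ := (π / 2 - ψ 0) / (1 - b) with hcdef
    have h1 : π / 2 ≤ ψ (max 0 c) := by
      have h := hgrow (le_max_left 0 c)
      have h2 : c ≤ max 0 c := le_max_right 0 c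
      have h3 : π / 2 - ψ 0 ≤ (1 - b) * max 0 c := by
        rw [hcdef] at h2
        rw [div_le_iff₀ hb1'] at h2
        linarith
      linarith
    have h2 : ψ (min 0 c) ≤ π / 2 := by
      have h := hgrow (min_le_left 0 c)
      have h2 : min 0 c ≤ c := min_le_right 0 c
      have h3 : (1 - b) * min 0 c ≤ π / 2 - ψ 0 := by
        rw [hcdef] at h2
        rw [le_div_iff₀ hb1'] at h2
        linarith
      linarith
    have hmm : min 0 c ≤ max 0 c := le_trans (min_le_left 0 c) (le_max_left 0 c)
    obtain ⟨σ₀, -, hσ₀⟩ :=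
      intermediate_value_Icc hmm (hψC.continuous.continuousOn) ⟨h2, h1⟩
    -- deriv g (π/2) = b
    have hq1 : HasDerivAt (fun t : ℝ => 1 - b ^ 2 * Real.sin t ^ 2) 0 (π / 2) :=
      hasDerivAt_congr_deriv
        ((((Real.hasDerivAt_sin (π / 2)).pow 2).const_mul (b ^ 2)).const_sub 1)
        (by simp [Real.cos_pi_div_two])
    have hq2 : HasDerivAt (fun t : ℝ => Real.sqrt (1 - b ^ 2 * Real.sin t ^ 2)) 0 (π / 2) :=
      hasDerivAt_congr_deriv
        ((Real.hasDerivAt_sqrt (hq (π / 2)).ne').comp (π / 2) hq1) (by ring)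
    have hgd2 : HasDerivAt g b (π / 2) := by
      rw [hgfun]
      exact hasDerivAt_congr_deriv
        (hq2.sub ((Real.hasDerivAt_cos (π / 2)).const_mul b))
        (by simp [Real.sin_pi_div_two])
    refine ⟨σ₀, ?_⟩
    rw [hσ₀, hgd2.deriv]
    positivity
end
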